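/- Let L_g be a real symmetric |F| × |F| matrix and let B = I_{|F|} ⊗ B1 + L_g ⊗ B2, where B1 = [[0,1],[0,0]] and B2 = [[0,0],[−1,−1]]. Then a complex number μ is an eigenvalue of B (viewed as a complex matrix) if and only if there exists a (real) eigenvalue λ of L_g such that μ² + λ·μ + λ = 0. -/

import Mathlib

open scoped Kronecker Matrix

/-- The network formation dynamics matrix `B = I ⊗ B₁ + L_g ⊗ B₂` with unit control
gains, where `B₁ = [[0,1],[0,0]]` and `B₂ = [[0,0],[−1,−1]]`. -/
noncomputable def formationMatrix {F : Type*} [Fintype F] [DecidableEq F]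
    (Lg : Matrix F F ℝ) : Matrix (F × Fin 2) (F × Fin 2) ℝ :=
  (1 : Matrix F F ℝ) ⊗ₖ !![0, 1; 0, 0] + Lg ⊗ₖ !![0, 0; -1, -1]

/-- For a real symmetric matrix `L_g`, a complex number `μ` is an eigenvalue of
`B = I ⊗ B₁ + L_g ⊗ B₂` (viewed as a complex matrix) iff there is a real eigenvalue `λ` of
`L_g` with `μ² + λ·μ + λ = 0`. -/
theorem formationMatrix_eigenvalues {F : Type*} [Fintype F] [DecidableEq F]
    (Lg : Matrix F F ℝ) (hsym : Lg.IsHermitian) (μ : ℂ) :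
    μ ∈ spectrum ℂ ((formationMatrix Lg).map (Complex.ofReal)) ↔
      ∃ l : ℝ, l ∈ spectrum ℝ Lg ∧ μ ^ 2 + (l : ℂ) * μ + (l : ℂ) = 0 := by
  classical
  set ev : F → ℝ := hsym.eigenvalues with hev
  set U : Matrix F F ℝ := (hsym.eigenvectorUnitary : Matrix F F ℝ) with hU
  -- map to ℂ via ring hom
  let φ : Matrix F F ℝ →+* Matrix F F ℂ := (Complex.ofRealHom).mapMatrix
  let Uc : Matrix F F ℂ := U.map Complex.ofReal
  let Vc : Matrix F F ℂ := (star U).map Complex.ofReal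
  have hUV : Uc * Vc = 1 := by
    have h1 : U * star U = 1 :=
      Matrix.mem_unitaryGroup_iff.mp hsym.eigenvectorUnitary.2
    have : φ (U * star U) = φ 1 := by rw [h1]
    simpa [φ, RingHom.mapMatrix_apply, Uc, Vc, map_mul,
      show (⇑Complex.ofRealHom : ℝ → ℂ) = Complex.ofReal from rfl] using this
  -- diagonal eigenvalue matrix over ℂ
  let Dc : Matrix F F ℂ := Matrix.diagonal (fun i => (ev i : ℂ))
  have hLg : Lg.map Complex.ofReal = Uc * Dc * Vc := by
    have h0 : φ Lg = φ U * φ (Matrix.diagonal (RCLike.ofReal ∘ ev)) * φ (star U) := by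
      rw [← map_mul, ← map_mul]
      exact congrArg φ hsym.spectral_theorem
    have h2 : φ (Matrix.diagonal (RCLike.ofReal ∘ ev)) = Dc := by
      ext i j
      by_cases h : i = j <;>
        simp [φ, RingHom.mapMatrix_apply, Matrix.map_apply, Matrix.diagonal_apply, Dc, h]
    rw [h2] at h0
    simpa [φ, RingHom.mapMatrix_apply, Uc, Vc,
      show (⇑Complex.ofRealHom : ℝ → ℂ) = Complex.ofReal from rfl] using h0
  -- complex versions of the 2×2 blocks
  set B1c : Matrix (Fin 2) (Fin 2) ℂ := !![0, 1; 0, 0] with hB1c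
  set B2c : Matrix (Fin 2) (Fin 2) ℂ := !![0, 0; -1, -1] with hB2c
  have hBc : (formationMatrix Lg).map Complex.ofReal =
      (1 : Matrix F F ℂ) ⊗ₖ B1c + (Lg.map Complex.ofReal) ⊗ₖ B2c := by
    ext ⟨i, a⟩ ⟨j, b⟩
    simp only [formationMatrix, Matrix.map_apply, Matrix.add_apply,
      Matrix.kroneckerMap_apply]
    push_cast
    congr 1
    · congr 1
      · simp [Matrix.one_apply]; split <;> simp
      · fin_cases a <;> fin_cases b <;> simp [hB1c]
    · congr 1
      fin_cases a <;> fin_cases b <;> simp [hB2c]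
  -- the block-diagonalized middle matrix
  set M : Matrix (F × Fin 2) (F × Fin 2) ℂ := (1 : Matrix F F ℂ) ⊗ₖ B1c + Dc ⊗ₖ B2c with hM
  have hconj : (formationMatrix Lg).map Complex.ofReal =
      (Uc ⊗ₖ (1 : Matrix (Fin 2) (Fin 2) ℂ)) * M * (Vc ⊗ₖ 1) := by
    rw [hBc, hLg, hM]
    rw [Matrix.mul_add, Matrix.add_mul]
    simp only [← Matrix.mul_kronecker_mul]
    simp only [Matrix.mul_one, Matrix.one_mul, hUV]
  -- the determinant computation
  have hone : (Uc ⊗ₖ (1 : Matrix (Fin 2) (Fin 2) ℂ)) * (Vc ⊗ₖ 1) = 1 := by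
    rw [← Matrix.mul_kronecker_mul, hUV, Matrix.one_mul, Matrix.one_kronecker_one]
  have hdet : (algebraMap ℂ (Matrix (F × Fin 2) (F × Fin 2) ℂ) μ
        - (formationMatrix Lg).map Complex.ofReal).det
      = ∏ i, (μ ^ 2 + (ev i : ℂ) * μ + (ev i : ℂ)) := by
    have hsc : algebraMap ℂ (Matrix (F × Fin 2) (F × Fin 2) ℂ) μ
        = (Uc ⊗ₖ (1 : Matrix (Fin 2) (Fin 2) ℂ)) *
          (algebraMap ℂ (Matrix (F × Fin 2) (F × Fin 2) ℂ) μ) * (Vc ⊗ₖ 1) := by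
      rw [Algebra.algebraMap_eq_smul_one, mul_smul_comm, Matrix.mul_one, smul_mul_assoc, hone]
    have hfact : algebraMap ℂ (Matrix (F × Fin 2) (F × Fin 2) ℂ) μ
          - (formationMatrix Lg).map Complex.ofReal
        = (Uc ⊗ₖ (1 : Matrix (Fin 2) (Fin 2) ℂ)) *
          ((algebraMap ℂ (Matrix (F × Fin 2) (F × Fin 2) ℂ) μ) - M) * (Vc ⊗ₖ 1) := by
      rw [Matrix.mul_sub, Matrix.sub_mul, ← hsc, ← hconj]
    rw [hfact, Matrix.det_mul, Matrix.det_mul]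
    have hdet1 : ((Uc ⊗ₖ (1 : Matrix (Fin 2) (Fin 2) ℂ)).det) * ((Vc ⊗ₖ (1 : Matrix (Fin 2) (Fin 2) ℂ)).det) = 1 := by
      rw [← Matrix.det_mul, hone, Matrix.det_one]
    have : (Uc ⊗ₖ (1 : Matrix (Fin 2) (Fin 2) ℂ)).det *
        ((algebraMap ℂ (Matrix (F × Fin 2) (F × Fin 2) ℂ) μ) - M).det *
        (Vc ⊗ₖ (1 : Matrix (Fin 2) (Fin 2) ℂ)).det
        = ((algebraMap ℂ (Matrix (F × Fin 2) (F × Fin 2) ℂ) μ) - M).det *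
          ((Uc ⊗ₖ (1 : Matrix (Fin 2) (Fin 2) ℂ)).det *
            (Vc ⊗ₖ (1 : Matrix (Fin 2) (Fin 2) ℂ)).det) := by ring
    rw [this, hdet1, mul_one]
    -- now compute det (μ•1 - M) via block diagonal
    set d : F → Matrix (Fin 2) (Fin 2) ℂ :=
      fun i => !![μ, -1; (ev i : ℂ), μ + (ev i : ℂ)] with hd
    have hblock : (algebraMap ℂ (Matrix (F × Fin 2) (F × Fin 2) ℂ) μ) - M
        = (Matrix.blockDiagonal d).submatrix (Equiv.prodComm F (Fin 2))
            (Equiv.prodComm F (Fin 2)) := by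
      ext ⟨i, a⟩ ⟨j, b⟩
      simp only [Matrix.sub_apply, Matrix.algebraMap_matrix_apply, hM, Matrix.add_apply,
        Matrix.kroneckerMap_apply, Matrix.submatrix_apply, Equiv.prodComm_apply, Prod.swap_prod_mk,
        Matrix.blockDiagonal_apply, Matrix.one_apply, Matrix.diagonal_apply, Dc]
      by_cases hij : i = j
      · subst hij
        simp only [if_pos rfl, Prod.mk.injEq, true_and]
        fin_cases a <;> fin_cases b <;>
          simp [hd, hB1c, hB2c, Matrix.algebraMap_matrix_apply]
      · simp only [if_neg hij, if_neg (by simpa using hij), Prod.mk.injEq]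
        rw [if_neg (by tauto)]
        ring
    rw [hblock, Matrix.det_submatrix_equiv_self, Matrix.det_blockDiagonal]
    refine Finset.prod_congr rfl fun i _ => ?_
    rw [hd]
    rw [Matrix.det_fin_two_of]
    ring
  -- put it together
  rw [spectrum.mem_iff, Matrix.isUnit_iff_isUnit_det, isUnit_iff_ne_zero, not_ne_iff, hdet,
    Finset.prod_eq_zero_iff]
  constructor
  · rintro ⟨i, -, hi⟩
    exact ⟨ev i, hsym.eigenvalues_mem_spectrum_real i, hi⟩
  · rintro ⟨l, hl, h⟩
    rw [hsym.spectrum_real_eq_range_eigenvalues] at hl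
    obtain ⟨i, rfl⟩ := hl
    exact ⟨i, Finset.mem_univ i, h⟩
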